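/- arXiv:2501.08033 — 3 statements merged into one kernel-verified Lean document; each statement's English description precedes it below -/
import Mathlib

section
/- For all real a, b, the absolute value of the partial derivative of f(a,b) = (1 + a*b)/sqrt((1+a^2)(1+b^2)) with respect to a is at most 1. -/
theorem abs_partial_deriv_skewB_le_one (a b : ℝ) :
    |deriv (fun x : ℝ => (1 + x * b) / Real.sqrt ((1 + x ^ 2) * (1 + b ^ 2))) a| ≤ 1 := by
  have hcpos : (0:ℝ) < 1 + b ^ 2 := by positivity
  have hUpos : (0:ℝ) < (1 + a ^ 2) * (1 + b ^ 2) := by positivity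
  set S := Real.sqrt ((1 + a ^ 2) * (1 + b ^ 2)) with hS
  have hSpos : 0 < S := Real.sqrt_pos.mpr hUpos
  have hS2 : S ^ 2 = (1 + a ^ 2) * (1 + b ^ 2) := Real.sq_sqrt hUpos.le
  have hder : HasDerivAt (fun x : ℝ => (1 + x * b) / Real.sqrt ((1 + x ^ 2) * (1 + b ^ 2)))
      ((b * S - (1 + a * b) * (a * (1 + b ^ 2) / S)) / S ^ 2) a := by
    have h1 : HasDerivAt (fun x : ℝ => 1 + x * b) b a := by
      simpa using ((hasDerivAt_id a).mul_const b).const_add 1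
    have h2 : HasDerivAt (fun x : ℝ => (1 + x ^ 2) * (1 + b ^ 2))
        (2 * a * (1 + b ^ 2)) a := by
      have := ((hasDerivAt_pow 2 a).const_add 1).mul_const (1 + b ^ 2)
      simpa using this
    have h3 : HasDerivAt (fun x : ℝ => Real.sqrt ((1 + x ^ 2) * (1 + b ^ 2)))
        (2 * a * (1 + b ^ 2) / (2 * S)) a := h2.sqrt hUpos.ne'
    have heq : 2 * a * (1 + b ^ 2) / (2 * S) = a * (1 + b ^ 2) / S := by
      rw [mul_comm 2 S, ← div_div]
      ring_nf
    rw [heq] at h3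
    exact h1.div h3 hSpos.ne'
  rw [hder.deriv]
  have key : (b * S - (1 + a * b) * (a * (1 + b ^ 2) / S)) / S ^ 2
      = (1 + b ^ 2) * (b - a) / S ^ 3 := by
    field_simp
    linear_combination b * hS2
  rw [key]
  rw [abs_div, abs_of_pos (by positivity : (0:ℝ) < S ^ 3)]
  rw [div_le_one (by positivity)]
  have hba : |b - a| ≤ S := by
    have h1 : (b - a) ^ 2 ≤ (1 + a ^ 2) * (1 + b ^ 2) := by nlinarith [sq_nonneg (1 + a * b)]
    simpa [Real.sqrt_sq_eq_abs, hS] using Real.sqrt_le_sqrt h1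
  have hS3 : S ^ 3 = S * S ^ 2 := by ring
  have hle : (1 + b ^ 2) ≤ S ^ 2 := by nlinarith [sq_nonneg a]
  calc |(1 + b ^ 2) * (b - a)| = (1 + b ^ 2) * |b - a| := by
        rw [abs_mul, abs_of_pos hcpos]
    _ ≤ S ^ 2 * S := by
        have := abs_nonneg (b - a)
        nlinarith
    _ = S ^ 3 := by ring
end

section
/- The function f(a,b) = (1 + a*b)/sqrt((1+a^2)(1+b^2)) satisfies the Lipschitz-type bound |f(a',b') - f(a,b)| ≤ |a' - a| + |b' - b| for all real a, a', b, b'. -/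
noncomputable def skewB (a b : ℝ) : ℝ := (1 + a * b) / Real.sqrt ((1 + a ^ 2) * (1 + b ^ 2))

lemma skewB_eq_cos (a b : ℝ) :
    skewB a b = Real.cos (Real.arctan a - Real.arctan b) := by
  have ha : (0:ℝ) < Real.sqrt (1 + a ^ 2) := Real.sqrt_pos.2 (by positivity)
  have hb : (0:ℝ) < Real.sqrt (1 + b ^ 2) := Real.sqrt_pos.2 (by positivity)
  rw [Real.cos_sub, Real.cos_arctan, Real.sin_arctan, Real.cos_arctan, Real.sin_arctan,
    skewB, Real.sqrt_mul (by positivity)]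
  field_simp

lemma cos_lip : LipschitzWith 1 Real.cos := by
  apply lipschitzWith_of_nnnorm_deriv_le Real.differentiable_cos
  intro x
  rw [Real.deriv_cos]
  rw [← NNReal.coe_le_coe]
  simp [Real.norm_eq_abs, abs_le, Real.neg_one_le_sin, Real.sin_le_one]

lemma arctan_lip : LipschitzWith 1 Real.arctan := by
  apply lipschitzWith_of_nnnorm_deriv_le Real.differentiable_arctan
  intro x
  rw [Real.deriv_arctan]
  rw [← NNReal.coe_le_coe]
  simp only [coe_nnnorm, Real.norm_eq_abs, NNReal.coe_one]
  rw [abs_of_nonneg (by positivity)]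
  rw [div_le_one (by positivity)]
  nlinarith [sq_nonneg x]

theorem skewB_lipschitz (a a' b b' : ℝ) :
    |skewB a' b' - skewB a b| ≤ |a' - a| + |b' - b| := by
  rw [skewB_eq_cos, skewB_eq_cos]
  have h1 := cos_lip.dist_le_mul (Real.arctan a' - Real.arctan b') (Real.arctan a - Real.arctan b)
  have h2 := arctan_lip.dist_le_mul a' a
  have h3 := arctan_lip.dist_le_mul b' b
  simp only [NNReal.coe_one, one_mul, Real.dist_eq] at h1 h2 h3
  calc |Real.cos (Real.arctan a' - Real.arctan b') - Real.cos (Real.arctan a - Real.arctan b)|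
      ≤ |(Real.arctan a' - Real.arctan b') - (Real.arctan a - Real.arctan b)| := h1
    _ ≤ |Real.arctan a' - Real.arctan a| + |Real.arctan b' - Real.arctan b| := by
        rw [show (Real.arctan a' - Real.arctan b') - (Real.arctan a - Real.arctan b)
            = (Real.arctan a' - Real.arctan a) - (Real.arctan b' - Real.arctan b) by ring]
        exact abs_sub _ _
    _ ≤ |a' - a| + |b' - b| := add_le_add h2 h3
end

section
/- Let a, â, b, b̂ be real numbers and define B(x,y) = (1+xy)/sqrt((1+x^2)(1+y^2)). If |â - a| ≤ t and |b̂ - b| ≤ t for some t ≥ 0, then |B(â,b̂) - B(a,b)| ≤ 2t. -/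
lemma abs_cos_sub_cos_le (x y : ℝ) : |Real.cos x - Real.cos y| ≤ |x - y| := by
  rw [Real.cos_sub_cos]
  have h1 : |Real.sin ((x + y) / 2)| ≤ 1 := Real.abs_sin_le_one _
  have h2 : |Real.sin ((x - y) / 2)| ≤ |(x - y) / 2| := Real.abs_sin_le_abs
  calc |(-2) * Real.sin ((x + y) / 2) * Real.sin ((x - y) / 2)|
      = 2 * |Real.sin ((x + y) / 2)| * |Real.sin ((x - y) / 2)| := by
        rw [abs_mul, abs_mul]; norm_num
    _ ≤ 2 * 1 * |(x - y) / 2| := by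
        apply mul_le_mul _ h2 (abs_nonneg _) (by norm_num)
        exact mul_le_mul_of_nonneg_left h1 (by norm_num)
    _ = |x - y| := by rw [abs_div]; rw [abs_of_pos (by norm_num : (0:ℝ) < 2)]; ring

lemma abs_arctan_sub_arctan_le (x y : ℝ) : |Real.arctan x - Real.arctan y| ≤ |x - y| := by
  have := Convex.norm_image_sub_le_of_norm_deriv_le
    (f := Real.arctan) (C := 1) (s := Set.univ)
    (fun z _ => Real.differentiable_arctan z)
    (fun z _ => by
      rw [Real.deriv_arctan]
      have hz : (0:ℝ) < 1 + z ^ 2 := by positivity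
      rw [Real.norm_eq_abs, abs_of_pos (by positivity)]
      rw [div_le_one hz]; nlinarith)
    (convex_univ) (Set.mem_univ y) (Set.mem_univ x)
  simpa using this

theorem skewB_plugin_error (a ahat b bhat t : ℝ) (ht : 0 ≤ t)
    (ha : |ahat - a| ≤ t) (hb : |bhat - b| ≤ t) :
    |skewB ahat bhat - skewB a b| ≤ 2 * t := by
  rw [skewB_eq_cos, skewB_eq_cos]
  calc |Real.cos (Real.arctan ahat - Real.arctan bhat) - Real.cos (Real.arctan a - Real.arctan b)|
      ≤ |(Real.arctan ahat - Real.arctan bhat) - (Real.arctan a - Real.arctan b)| :=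
        abs_cos_sub_cos_le _ _
    _ ≤ |Real.arctan ahat - Real.arctan a| + |Real.arctan bhat - Real.arctan b| := by
        have := abs_sub (Real.arctan ahat - Real.arctan a) (Real.arctan bhat - Real.arctan b)
        calc |(Real.arctan ahat - Real.arctan bhat) - (Real.arctan a - Real.arctan b)|
            = |(Real.arctan ahat - Real.arctan a) - (Real.arctan bhat - Real.arctan b)| := by
              ring_nf
          _ ≤ _ := abs_sub _ _
    _ ≤ t + t := add_le_add ((abs_arctan_sub_arctan_le _ _).trans ha)
        ((abs_arctan_sub_arctan_le _ _).trans hb)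
    _ = 2 * t := by ring
end
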